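/- For every nonnegative integer n, ∑_{k=0}^{n-1} (3k+2)·C(2k,k) = n·C(2n,n). -/

import Mathlib

theorem sum_central_binom_identity (n : ℕ) :
    ∑ k ∈ Finset.range n, (3 * k + 2) * (2 * k).choose k = n * (2 * n).choose n := by
  induction n with
  | zero => simp
  | succ n ih =>
    rw [Finset.sum_range_succ, ih]
    have h := Nat.succ_mul_centralBinom_succ n
    simp only [Nat.centralBinom] at h
    rw [show 2 * (n + 1) = 2 * n + 2 by ring] at h ⊢
    rw [h]; ring
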